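/- Let H = (C, f, D, g) be a hybrid system and let ψ₁ = (φ₁, υ₁) and ψ₂ = (φ₂, υ₂) be solution pairs to H such that: (1) ψ₁ is compact; (2) φ₁(T, J) = φ₂(0, 0), where (T, J) = max dom ψ₁; (3) if both I_{ψ₁}^J := {t : (t, J) ∈ dom ψ₁} and I_{ψ₂}^0 := {t : (t, 0) ∈ dom ψ₂} have nonempty interior, then (φ₂(0,0), υ₂(0,0)) ∈ C. Then the concatenation ψ = (φ₁|φ₂, υ₁|υ₂) is a solution pair to H. -/

import Mathlib

open MeasureTheory Set

noncomputable section

/-- State/input space: `ℝ^k` with the Euclidean norm. -/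
abbrev Vec (k : ℕ) : Type := EuclideanSpace ℝ (Fin k)

/-- A set `E ⊆ ℝ × ℕ` is a compact hybrid time domain if
`E = ⋃_{j=0}^{J} ([t_j, t_{j+1}] × {j})` for some `J ∈ ℕ` and a finite nondecreasing
sequence `0 = t_0 ≤ t_1 ≤ ... ≤ t_{J+1}`. -/
def IsCompactHTD (E : Set (ℝ × ℕ)) : Prop :=
  ∃ (J : ℕ) (t : ℕ → ℝ), t 0 = 0 ∧ (∀ i, i ≤ J → t i ≤ t (i + 1)) ∧
    E = ⋃ j ∈ Finset.range (J + 1), Set.Icc (t j) (t (j + 1)) ×ˢ ({j} : Set ℕ)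

/-- A hybrid time domain is the union of a nondecreasing sequence of compact
hybrid time domains. -/
def IsHTD (E : Set (ℝ × ℕ)) : Prop :=
  ∃ F : ℕ → Set (ℝ × ℕ), (∀ k, IsCompactHTD (F k)) ∧ Monotone F ∧ E = ⋃ k, F k

/-- The time slice `I^j = {t : (t,j) ∈ E}`. -/
def Slice (E : Set (ℝ × ℕ)) (j : ℕ) : Set ℝ := {t | (t, j) ∈ E}

/-- `(T,J) = max E` for a (compact) hybrid time domain `E`. -/
def IsMaxOf (E : Set (ℝ × ℕ)) (T : ℝ) (J : ℕ) : Prop :=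
  (T, J) ∈ E ∧ ∀ p ∈ E, p.1 ≤ T ∧ p.2 ≤ J

/-- `s` is Lebesgue measurable on `S`: preimages (within `S`) of open sets are
Lebesgue measurable subsets of `ℝ`. -/
def LebesgueMeasurableOn {k : ℕ} (s : ℝ → Vec k) (S : Set ℝ) : Prop :=
  ∀ U : Set (Vec k), IsOpen U → NullMeasurableSet {t | t ∈ S ∧ s t ∈ U} volume

/-- `s` is locally essentially bounded on `S`. -/
def LocallyEssBddOn {k : ℕ} (s : ℝ → Vec k) (S : Set ℝ) : Prop :=
  ∀ r ∈ S, ∃ U : Set ℝ, IsOpen U ∧ r ∈ U ∧ ∃ c : ℝ, 0 ≤ c ∧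
    ∀ᵐ t ∂(volume.restrict (U ∩ S)), ‖s t‖ ≤ c

/-- `s` is absolutely continuous on `[a,b]`: for each `ε > 0` there is `δ > 0` such
that every countable collection of disjoint subintervals of `[a,b]` of total length
at most `δ` has total variation of `s` at most `ε`. -/
def AbsContOn {k : ℕ} (s : ℝ → Vec k) (a b : ℝ) : Prop :=
  ∀ ε : ℝ, 0 < ε → ∃ δ : ℝ, 0 < δ ∧ ∀ I : ℕ → ℝ × ℝ,
    (∀ i, a ≤ (I i).1 ∧ (I i).1 ≤ (I i).2 ∧ (I i).2 ≤ b) →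
    (∀ i i', i ≠ i' → Disjoint (Set.Ioo (I i).1 (I i).2) (Set.Ioo (I i').1 (I i').2)) →
    (∑' i, ((I i).2 - (I i).1)) ≤ δ →
    (∑' i, ‖s (I i).2 - s (I i).1‖) ≤ ε

/-- `s` is locally absolutely continuous on `S`: absolutely continuous on every
compact subinterval of `S`. -/
def LocAbsContOn {k : ℕ} (s : ℝ → Vec k) (S : Set ℝ) : Prop :=
  ∀ a b : ℝ, a ≤ b → Set.Icc a b ⊆ S → AbsContOn s a b

/-- `s` is locally bounded on `S`. -/
def LocallyBoundedOn {k : ℕ} (s : ℝ → Vec k) (S : Set ℝ) : Prop :=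
  ∀ t₀ ∈ S, ∃ A ∈ nhds t₀, ∃ M : ℝ, 0 < M ∧ ∀ t ∈ A ∩ S, ‖s t‖ ≤ M

/-- A hybrid input: a function on a hybrid time domain `E` that is Lebesgue measurable
and locally essentially bounded on each time slice. -/
def IsHybridInput {m : ℕ} (υ : ℝ → ℕ → Vec m) (E : Set (ℝ × ℕ)) : Prop :=
  IsHTD E ∧ ∀ j : ℕ,
    LebesgueMeasurableOn (fun t => υ t j) (Slice E j) ∧
    LocallyEssBddOn (fun t => υ t j) (Slice E j)

/-- A hybrid arc: a function on a hybrid time domain `E` that is locally absolutely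
continuous on each time slice. -/
def IsHybridArc {n : ℕ} (φ : ℝ → ℕ → Vec n) (E : Set (ℝ × ℕ)) : Prop :=
  IsHTD E ∧ ∀ j : ℕ, LocAbsContOn (fun t => φ t j) (Slice E j)

/-- A hybrid system `H = (C, f, D, g)`. -/
structure HybridSystem (n m : ℕ) where
  C : Set (Vec n × Vec m)
  f : Vec n × Vec m → Vec n
  D : Set (Vec n × Vec m)
  g : Vec n × Vec m → Vec n

/-- `(φ, υ)` with common domain `E` is a solution pair to `H`. -/
def IsSolutionPair {n m : ℕ} (H : HybridSystem n m)
    (φ : ℝ → ℕ → Vec n) (υ : ℝ → ℕ → Vec m) (E : Set (ℝ × ℕ)) : Prop :=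
  IsHybridArc φ E ∧ IsHybridInput υ E ∧
  (φ 0 0, υ 0 0) ∈ closure H.C ∪ H.D ∧
  (∀ j : ℕ, (interior (Slice E j)).Nonempty →
    (∀ t ∈ interior (Slice E j), (φ t j, υ t j) ∈ H.C) ∧
    (∀ᵐ t ∂(volume.restrict (Slice E j)),
      HasDerivWithinAt (fun s => φ s j) (H.f (φ t j, υ t j)) (Slice E j) t)) ∧
  (∀ p : ℝ × ℕ, p ∈ E → (p.1, p.2 + 1) ∈ E →
    (φ p.1 p.2, υ p.1 p.2) ∈ H.D ∧ φ p.1 (p.2 + 1) = H.g (φ p.1 p.2, υ p.1 p.2))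

/-- Backward-in-time jump map `g^bw(x,u) = {z : x = g(z,u), (z,u) ∈ D}`. -/
def gbw {n m : ℕ} (H : HybridSystem n m) (x : Vec n) (u : Vec m) : Set (Vec n) :=
  {z | x = H.g (z, u) ∧ (z, u) ∈ H.D}

/-- Backward-in-time jump set `D^bw`. -/
def Dbw {n m : ℕ} (H : HybridSystem n m) : Set (Vec n × Vec m) :=
  {p | ∃ z : Vec n, p.1 = H.g (z, p.2) ∧ (z, p.2) ∈ H.D}

/-- `(φ, υ)` with common domain `E` is a solution pair to the backward-in-time
system `H^bw = (C, -f, D^bw, g^bw)` of `H` (the jump inclusion is set-valued). -/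
def IsBwSolutionPair {n m : ℕ} (H : HybridSystem n m)
    (φ : ℝ → ℕ → Vec n) (υ : ℝ → ℕ → Vec m) (E : Set (ℝ × ℕ)) : Prop :=
  IsHybridArc φ E ∧ IsHybridInput υ E ∧
  (φ 0 0, υ 0 0) ∈ closure H.C ∪ Dbw H ∧
  (∀ j : ℕ, (interior (Slice E j)).Nonempty →
    (∀ t ∈ interior (Slice E j), (φ t j, υ t j) ∈ H.C) ∧
    (∀ᵐ t ∂(volume.restrict (Slice E j)),
      HasDerivWithinAt (fun s => φ s j) (-(H.f (φ t j, υ t j))) (Slice E j) t)) ∧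
  (∀ p : ℝ × ℕ, p ∈ E → (p.1, p.2 + 1) ∈ E →
    (φ p.1 p.2, υ p.1 p.2) ∈ Dbw H ∧ φ p.1 (p.2 + 1) ∈ gbw H (φ p.1 p.2) (υ p.1 p.2))

/-- Minkowski sum `E + {(T,J)}`. -/
def Shift (E : Set (ℝ × ℕ)) (T : ℝ) (J : ℕ) : Set (ℝ × ℕ) :=
  {p | ∃ q ∈ E, p = (q.1 + T, q.2 + J)}

/-- `ψ` with domain `E` is the concatenation `ψ₁|ψ₂`, where `(T,J) = max E₁`. -/
def IsConcat {α : Type*} (T : ℝ) (J : ℕ)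
    (ψ₁ : ℝ → ℕ → α) (E₁ : Set (ℝ × ℕ))
    (ψ₂ : ℝ → ℕ → α) (E₂ : Set (ℝ × ℕ))
    (ψ : ℝ → ℕ → α) (E : Set (ℝ × ℕ)) : Prop :=
  E = E₁ ∪ Shift E₂ T J ∧
  (∀ p ∈ E₁, p ≠ (T, J) → ψ p.1 p.2 = ψ₁ p.1 p.2) ∧
  (∀ p ∈ Shift E₂ T J, ψ p.1 p.2 = ψ₂ (p.1 - T) (p.2 - J))

/-- Minkowski difference `{(T,J)} − E`. -/
def RevDom (E : Set (ℝ × ℕ)) (T : ℝ) (J : ℕ) : Set (ℝ × ℕ) :=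
  {p | ∃ q ∈ E, p = (T - q.1, J - q.2)}

/-- `(φ', υ')` with domain `E'` is the reversal of the compact pair `(φ, υ)` with
domain `E` and `(T,J) = max E`; `C` is the flow set used in the closure condition
on `υ'(0,0)`. -/
def IsReversal {n m : ℕ} (C : Set (Vec n × Vec m)) (T : ℝ) (J : ℕ)
    (φ : ℝ → ℕ → Vec n) (υ : ℝ → ℕ → Vec m) (E : Set (ℝ × ℕ))
    (φ' : ℝ → ℕ → Vec n) (υ' : ℝ → ℕ → Vec m) (E' : Set (ℝ × ℕ)) : Prop :=
  E' = RevDom E T J ∧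
  (∀ p ∈ E', φ' p.1 p.2 = φ (T - p.1) (J - p.2)) ∧
  (∀ j : ℕ, ∀ t ∈ interior (Slice E' j), υ' t j = υ (T - t) (J - j)) ∧
  ((interior (Slice E' 0)).Nonempty → (φ' 0 0, υ' 0 0) ∈ closure C) ∧
  (∀ p : ℝ × ℕ, p ∈ E' → (p.1, p.2 + 1) ∈ E' → υ' p.1 p.2 = υ (T - p.1) (J - (p.2 + 1)))

/-- Lipschitz flow assumption with constants `Kx, Ku`. -/
def LipschitzFlow {n m : ℕ} (H : HybridSystem n m) (Kx Ku : ℝ) : Prop :=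
  0 < Kx ∧ 0 < Ku ∧
  ∀ (x₀ x₁ : Vec n) (u₀ u₁ : Vec m),
    (x₀, u₀) ∈ H.C → (x₁, u₀) ∈ H.C → (x₀, u₁) ∈ H.C →
    ‖H.f (x₀, u₀) - H.f (x₁, u₀)‖ ≤ Kx * ‖x₀ - x₁‖ ∧
    ‖H.f (x₀, u₀) - H.f (x₀, u₁)‖ ≤ Ku * ‖u₀ - u₁‖

/-- Linearly bounded jump map assumption with constants `Kx, Ku`. -/
def LinearBoundedJump {n m : ℕ} (H : HybridSystem n m) (Kx Ku : ℝ) : Prop :=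
  0 < Kx ∧ 0 < Ku ∧
  ∀ (x₀ x₁ : Vec n) (u₀ u₁ : Vec m), (x₀, u₀) ∈ H.D → (x₁, u₁) ∈ H.D →
    ‖H.g (x₀, u₀) - H.g (x₁, u₁)‖ ≤ Kx * ‖x₀ - x₁‖ + Ku * ‖u₀ - u₁‖

/-- `φ` with domain `F ⊆ E'` is a reconstructed solution with input `υ'` (defined on
`E'`) and initial condition `x0`: it starts at `x0`, flows according to
`f(·, υ')` on each nondegenerate slice, and jumps according to `g(·, υ')`. -/
def IsReconSolution {n m : ℕ} (H : HybridSystem n m)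
    (υ' : ℝ → ℕ → Vec m) (E' : Set (ℝ × ℕ)) (x0 : Vec n)
    (φ : ℝ → ℕ → Vec n) (F : Set (ℝ × ℕ)) : Prop :=
  F ⊆ E' ∧ (0, 0) ∈ F ∧ φ 0 0 = x0 ∧ IsHTD F ∧
  (∀ j : ℕ, LocAbsContOn (fun t => φ t j) (Slice F j)) ∧
  (∀ j : ℕ, (interior (Slice F j)).Nonempty →
    ∀ᵐ t ∂(volume.restrict (Slice F j)),
      HasDerivWithinAt (fun s => φ s j) (H.f (φ t j, υ' t j)) (Slice F j) t) ∧
  (∀ p : ℝ × ℕ, p ∈ F → (p.1, p.2 + 1) ∈ F →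
    φ p.1 (p.2 + 1) = H.g (φ p.1 p.2, υ' p.1 p.2))

/-- A maximal reconstructed solution: one admitting no proper extension. -/
def IsMaximalRecon {n m : ℕ} (H : HybridSystem n m)
    (υ' : ℝ → ℕ → Vec m) (E' : Set (ℝ × ℕ)) (x0 : Vec n)
    (φ : ℝ → ℕ → Vec n) (F : Set (ℝ × ℕ)) : Prop :=
  IsReconSolution H υ' E' x0 φ F ∧
  ∀ (φ₂ : ℝ → ℕ → Vec n) (F₂ : Set (ℝ × ℕ)),
    IsReconSolution H υ' E' x0 φ₂ F₂ → F ⊆ F₂ →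
    (∀ p ∈ F, φ₂ p.1 p.2 = φ p.1 p.2) → F₂ = F


namespace ConcatAux
open Filter

lemma t_mono {J : ℕ} {t : ℕ → ℝ} (h : ∀ i, i ≤ J → t i ≤ t (i+1)) :
    ∀ i j, i ≤ j → j ≤ J + 1 → t i ≤ t j := by
  intro i j hij hj
  induction j with
  | zero =>
    have : i = 0 := by omega
    subst this; exact le_rfl
  | succ n ih =>
    rcases Nat.lt_or_ge i (n+1) with h'|h'
    · exact le_trans (ih (by omega) (by omega)) (h n (by omega))
    · have : i = n + 1 := by omega
      subst this; exact le_rfl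

lemma mem_cHTD_iff {J : ℕ} {t : ℕ → ℝ} {E : Set (ℝ × ℕ)}
    (hE : E = ⋃ j ∈ Finset.range (J + 1), Set.Icc (t j) (t (j + 1)) ×ˢ ({j} : Set ℕ))
    (p : ℝ × ℕ) : p ∈ E ↔ p.2 ≤ J ∧ p.1 ∈ Set.Icc (t p.2) (t (p.2 + 1)) := by
  subst hE
  simp only [Set.mem_iUnion, Finset.mem_range, Set.mem_prod, Set.mem_singleton_iff]
  constructor
  · rintro ⟨j, hj, h1, h2⟩
    refine ⟨by omega, by rwa [h2]⟩
  · rintro ⟨hj, h1⟩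
    exact ⟨p.2, by omega, h1, rfl⟩

lemma slice_cHTD {J : ℕ} {t : ℕ → ℝ} {E : Set (ℝ × ℕ)}
    (hE : E = ⋃ j ∈ Finset.range (J + 1), Set.Icc (t j) (t (j + 1)) ×ˢ ({j} : Set ℕ))
    (j : ℕ) : Slice E j = if j ≤ J then Set.Icc (t j) (t (j + 1)) else ∅ := by
  ext x
  simp only [Slice, Set.mem_setOf_eq, mem_cHTD_iff hE (x, j)]
  split <;> simp_all

lemma cHTD_zero_mem {E : Set (ℝ × ℕ)} (h : IsCompactHTD E) : (0, 0) ∈ E := by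
  obtain ⟨J, t, ht0, hmono, hE⟩ := h
  rw [mem_cHTD_iff hE]
  exact ⟨Nat.zero_le _, by rw [ht0]; exact Set.left_mem_Icc.mpr (by rw [← ht0]; exact hmono 0 (Nat.zero_le _))⟩

lemma cHTD_nonneg {E : Set (ℝ × ℕ)} (h : IsCompactHTD E) : ∀ p ∈ E, 0 ≤ p.1 := by
  obtain ⟨J, t, ht0, hmono, hE⟩ := h
  intro p hp
  rw [mem_cHTD_iff hE] at hp
  have h0 : t 0 ≤ t p.2 := t_mono hmono 0 p.2 (Nat.zero_le _) (by omega)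
  have := hp.2.1
  rw [ht0] at h0
  linarith

lemma cHTD_slice_meas {E : Set (ℝ × ℕ)} (h : IsCompactHTD E) (j : ℕ) :
    MeasurableSet (Slice E j) := by
  obtain ⟨J, t, ht0, hmono, hE⟩ := h
  rw [slice_cHTD hE]
  split
  · exact measurableSet_Icc
  · exact MeasurableSet.empty

lemma cHTD_slice0_dcl {E : Set (ℝ × ℕ)} (h : IsCompactHTD E) :
    ∀ x ∈ Slice E 0, Set.Icc (0:ℝ) x ⊆ Slice E 0 := by
  obtain ⟨J, t, ht0, hmono, hE⟩ := h
  intro x hx y hy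
  rw [slice_cHTD hE] at hx ⊢
  simp only [Nat.zero_le, if_true] at hx ⊢
  rw [ht0] at hx ⊢
  exact ⟨hy.1, le_trans hy.2 hx.2⟩

lemma HTD_zero_mem {E : Set (ℝ × ℕ)} (h : IsHTD E) : (0, 0) ∈ E := by
  obtain ⟨F, hF, hmono, hE⟩ := h
  rw [hE]
  exact Set.mem_iUnion.mpr ⟨0, cHTD_zero_mem (hF 0)⟩

lemma HTD_nonneg {E : Set (ℝ × ℕ)} (h : IsHTD E) : ∀ p ∈ E, 0 ≤ p.1 := by
  obtain ⟨F, hF, hmono, hE⟩ := h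
  intro p hp
  rw [hE] at hp
  obtain ⟨k, hk⟩ := Set.mem_iUnion.mp hp
  exact cHTD_nonneg (hF k) p hk

lemma HTD_slice_meas {E : Set (ℝ × ℕ)} (h : IsHTD E) (j : ℕ) :
    MeasurableSet (Slice E j) := by
  obtain ⟨F, hF, hmono, hE⟩ := h
  have : Slice E j = ⋃ k, Slice (F k) j := by
    ext x; simp [Slice, hE, Set.mem_iUnion]
  rw [this]
  exact MeasurableSet.iUnion fun k => cHTD_slice_meas (hF k) j

lemma HTD_slice0_dcl {E : Set (ℝ × ℕ)} (h : IsHTD E) :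
    ∀ x ∈ Slice E 0, Set.Icc (0:ℝ) x ⊆ Slice E 0 := by
  obtain ⟨F, hF, hmono, hE⟩ := h
  intro x hx y hy
  have hx' : ∃ k, x ∈ Slice (F k) 0 := by
    simpa [Slice, hE, Set.mem_iUnion] using hx
  obtain ⟨k, hk⟩ := hx'
  have : y ∈ Slice (F k) 0 := cHTD_slice0_dcl (hF k) x hk hy
  have : (y, 0) ∈ F k := this
  simp only [Slice, Set.mem_setOf_eq, hE, Set.mem_iUnion]
  exact ⟨k, this⟩


lemma normalize_E1 {E₁ : Set (ℝ × ℕ)} {T : ℝ} {J : ℕ}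
    (hcpt : IsCompactHTD E₁) (hmax : IsMaxOf E₁ T J) :
    ∃ t : ℕ → ℝ, t 0 = 0 ∧ (∀ i, i ≤ J → t i ≤ t (i+1)) ∧ t (J+1) = T ∧
      E₁ = ⋃ j ∈ Finset.range (J + 1), Set.Icc (t j) (t (j + 1)) ×ˢ ({j} : Set ℕ) := by
  obtain ⟨J', t, ht0, hmono, hE⟩ := hcpt
  have h2 : (t (J'+1), J') ∈ E₁ :=
    (mem_cHTD_iff hE _).mpr ⟨le_rfl, Set.right_mem_Icc.mpr (hmono J' le_rfl)⟩
  have hJ'J : J' = J := by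
    have h1 : J ≤ J' := ((mem_cHTD_iff hE (T,J)).mp hmax.1).1
    have := (hmax.2 _ h2).2
    simp only at this
    omega
  subst hJ'J
  have hT : t (J'+1) = T := by
    have hle := (hmax.2 _ h2).1
    have := ((mem_cHTD_iff hE (T,J')).mp hmax.1).2.2
    simp only at hle this
    linarith
  exact ⟨t, ht0, hmono, hT, hE⟩

lemma mem_shift_iff {E₂ : Set (ℝ × ℕ)} {T : ℝ} {J : ℕ} (p : ℝ × ℕ) :
    p ∈ Shift E₂ T J ↔ J ≤ p.2 ∧ (p.1 - T, p.2 - J) ∈ E₂ := by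
  constructor
  · rintro ⟨q, hq, hpq⟩
    rw [Prod.ext_iff] at hpq
    obtain ⟨h1, h2⟩ := hpq
    simp only at h1 h2
    have e1 : p.1 - T = q.1 := by rw [h1]; ring
    have e2 : p.2 - J = q.2 := by omega
    rw [e1, e2]
    exact ⟨by omega, hq⟩
  · rintro ⟨hJ, hq⟩
    refine ⟨(p.1 - T, p.2 - J), hq, ?_⟩
    rw [Prod.ext_iff]
    constructor
    · simp only; ring
    · simp only; omega

lemma shift_ge {E₂ : Set (ℝ × ℕ)} {T : ℝ} {J : ℕ} (hE₂ : IsHTD E₂)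
    {p : ℝ × ℕ} (hp : p ∈ Shift E₂ T J) : T ≤ p.1 := by
  rw [mem_shift_iff] at hp
  have := HTD_nonneg hE₂ _ hp.2
  simp only at this
  linarith

lemma slice_union (A B : Set (ℝ × ℕ)) (j : ℕ) :
    Slice (A ∪ B) j = Slice A j ∪ Slice B j := rfl

lemma slice_shift_ge {E₂ : Set (ℝ × ℕ)} {T : ℝ} {J : ℕ} {j : ℕ} (hj : J ≤ j) :
    Slice (Shift E₂ T J) j = (· - T) ⁻¹' (Slice E₂ (j - J)) := by
  ext x
  simp only [Slice, Set.mem_setOf_eq, Set.mem_preimage, mem_shift_iff]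
  exact ⟨fun h => h.2, fun h => ⟨hj, h⟩⟩

lemma slice_shift_lt {E₂ : Set (ℝ × ℕ)} {T : ℝ} {J : ℕ} {j : ℕ} (hj : j < J) :
    Slice (Shift E₂ T J) j = ∅ := by
  ext x
  simp only [Slice, Set.mem_setOf_eq, mem_shift_iff, Set.mem_empty_iff_false, iff_false]
  rintro ⟨h, -⟩
  omega

lemma cHTD_union_shift {E₁ F : Set (ℝ × ℕ)} {T : ℝ} {J : ℕ} {t : ℕ → ℝ}
    (ht0 : t 0 = 0) (hmono : ∀ i, i ≤ J → t i ≤ t (i+1)) (hT : t (J+1) = T)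
    (hE₁ : E₁ = ⋃ j ∈ Finset.range (J + 1), Set.Icc (t j) (t (j + 1)) ×ˢ ({j} : Set ℕ)) :
    IsCompactHTD F → IsCompactHTD (E₁ ∪ Shift F T J) := by
  rintro ⟨K, s, hs0, hsmono, hFE⟩
  have htJT : t J ≤ T := by rw [← hT]; exact hmono J le_rfl
  have hs1 : 0 ≤ s 1 := by rw [← hs0]; exact hsmono 0 (Nat.zero_le _)
  refine ⟨J + K, fun i => if i ≤ J then t i else T + s (i - J), ?_, ?_, ?_⟩
  · simp [ht0]
  · intro i hi
    by_cases h1 : i ≤ J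
    · by_cases h2 : i + 1 ≤ J
      · simp only [h1, if_true, h2, if_true]
        exact hmono i (by omega)
      · have hiJ : i = J := by omega
        subst hiJ
        simp only [h1, if_true, h2, if_false]
        have : i + 1 - i = 1 := by omega
        rw [this]
        linarith
    · simp only [h1, if_false, show ¬ (i + 1 ≤ J) by omega, if_false]
      have h3 : i + 1 - J = (i - J) + 1 := by omega
      rw [h3]
      have := hsmono (i - J) (by omega)
      linarith
  · ext p
    rw [Set.mem_union, mem_cHTD_iff hE₁, mem_shift_iff, mem_cHTD_iff hFE,
      mem_cHTD_iff (rfl : (⋃ j ∈ Finset.range ((J + K) + 1),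
        Set.Icc ((fun i => if i ≤ J then t i else T + s (i - J)) j)
          ((fun i => if i ≤ J then t i else T + s (i - J)) (j + 1)) ×ˢ ({j} : Set ℕ)) = _)]
    obtain ⟨x, j⟩ := p
    simp only [Set.mem_Icc]
    rcases Nat.lt_trichotomy j J with hj | hj | hj
    · have e1 : (if j ≤ J then t j else T + s (j - J)) = t j := by simp [le_of_lt hj]
      have e2 : (if j + 1 ≤ J then t (j+1) else T + s (j + 1 - J)) = t (j+1) := by
        simp [Nat.succ_le_of_lt hj]
      rw [e1, e2]
      constructor
      · rintro (⟨h1, h2⟩ | ⟨h1, -⟩)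
        · exact ⟨by omega, h2⟩
        · omega
      · rintro ⟨h1, h2⟩
        exact Or.inl ⟨by omega, h2⟩
    · subst hj
      have e1 : (if j ≤ j then t j else T + s (j - j)) = t j := by simp
      have e2 : (if j + 1 ≤ j then t (j+1) else T + s (j + 1 - j)) = T + s 1 := by
        simp [show ¬ (j + 1 ≤ j) by omega, show j + 1 - j = 1 by omega]
      rw [e1, e2]
      have ej : j - j = 0 := by omega
      rw [ej]
      constructor
      · rintro (⟨-, h1, h2⟩ | ⟨-, -, h1, h2⟩)
        · rw [hT] at h2
          exact ⟨by omega, h1, by linarith⟩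
        · rw [hs0] at h1
          exact ⟨by omega, by linarith, by linarith⟩
      · rintro ⟨-, h1, h2⟩
        by_cases hxT : x ≤ T
        · exact Or.inl ⟨le_rfl, h1, by rw [hT]; exact hxT⟩
        · refine Or.inr ⟨le_rfl, by omega, ?_, by linarith⟩
          rw [hs0]; linarith
    · have e1 : (if j ≤ J then t j else T + s (j - J)) = T + s (j - J) := by
        simp [show ¬ (j ≤ J) by omega]
      have e2 : (if j + 1 ≤ J then t (j+1) else T + s (j + 1 - J)) = T + s ((j - J) + 1) := by
        simp [show ¬ (j + 1 ≤ J) by omega, show j + 1 - J = (j - J) + 1 by omega]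
      rw [e1, e2]
      constructor
      · rintro (⟨h1, -⟩ | ⟨-, h1, h2, h3⟩)
        · omega
        · exact ⟨by omega, by linarith, by linarith⟩
      · rintro ⟨h1, h2, h3⟩
        exact Or.inr ⟨by omega, by omega, by linarith, by linarith⟩

lemma shift_mono {A B : Set (ℝ × ℕ)} {T : ℝ} {J : ℕ} (h : A ⊆ B) :
    Shift A T J ⊆ Shift B T J := by
  rintro p ⟨q, hq, hpq⟩
  exact ⟨q, h hq, hpq⟩

lemma concat_IsHTD {E E₁ E₂ : Set (ℝ × ℕ)} {T : ℝ} {J : ℕ} {t : ℕ → ℝ}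
    (ht0 : t 0 = 0) (hmono : ∀ i, i ≤ J → t i ≤ t (i+1)) (hT : t (J+1) = T)
    (hE₁ : E₁ = ⋃ j ∈ Finset.range (J + 1), Set.Icc (t j) (t (j + 1)) ×ˢ ({j} : Set ℕ))
    (hE₂ : IsHTD E₂) (hE : E = E₁ ∪ Shift E₂ T J) : IsHTD E := by
  obtain ⟨F, hF, hm, hE₂u⟩ := hE₂
  refine ⟨fun k => E₁ ∪ Shift (F k) T J,
    fun k => cHTD_union_shift ht0 hmono hT hE₁ (hF k), ?_, ?_⟩
  · intro a b hab
    exact Set.union_subset_union_right _ (shift_mono (hm hab))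
  · rw [hE, hE₂u]
    ext p
    simp only [Set.mem_union, Set.mem_iUnion, mem_shift_iff]
    constructor
    · rintro (h | ⟨hJ, k, hk⟩)
      · exact ⟨0, Or.inl h⟩
      · exact ⟨k, Or.inr ⟨hJ, hk⟩⟩
    · rintro ⟨k, h | ⟨hJ, hk⟩⟩
      · exact Or.inl h
      · exact Or.inr ⟨hJ, k, hk⟩

lemma lengths_summable {a b : ℝ} {I : ℕ → ℝ × ℝ}
    (hab : ∀ i, a ≤ (I i).1 ∧ (I i).1 ≤ (I i).2 ∧ (I i).2 ≤ b)
    (hdisj : ∀ i i', i ≠ i' → Disjoint (Set.Ioo (I i).1 (I i).2) (Set.Ioo (I i').1 (I i').2)) :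
    Summable (fun i => (I i).2 - (I i).1) := by
  have hba : 0 ≤ b - a := by have := hab 0; linarith [this.1, this.2.1, this.2.2]
  apply summable_of_sum_le (c := b - a)
  · intro i; have := (hab i).2.1; simp only [Pi.zero_apply]; linarith
  · intro u
    have hpd : (↑u : Set ℕ).PairwiseDisjoint (fun i => Set.Ioo (I i).1 (I i).2) :=
      fun i _ j _ hij => hdisj i j hij
    have h1 : volume (⋃ i ∈ u, Set.Ioo (I i).1 (I i).2)
        = ∑ i ∈ u, volume (Set.Ioo (I i).1 (I i).2) :=
      measure_biUnion_finset hpd (fun i _ => measurableSet_Ioo)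
    have h2 : (⋃ i ∈ u, Set.Ioo (I i).1 (I i).2) ⊆ Set.Icc a b := by
      intro x hx
      simp only [Set.mem_iUnion] at hx
      obtain ⟨i, -, h⟩ := hx
      have := hab i
      exact ⟨by linarith [h.1, this.1], by linarith [h.2, this.2.2]⟩
    have h3 := (h1 ▸ measure_mono h2 : ∑ i ∈ u, volume (Set.Ioo (I i).1 (I i).2) ≤ volume (Set.Icc a b))
    rw [Real.volume_Icc] at h3
    have h4 : ∑ i ∈ u, volume (Set.Ioo (I i).1 (I i).2)
        = ENNReal.ofReal (∑ i ∈ u, ((I i).2 - (I i).1)) := by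
      rw [ENNReal.ofReal_sum_of_nonneg (fun i _ => by have := (hab i).2.1; linarith)]
      exact Finset.sum_congr rfl (fun i _ => Real.volume_Ioo)
    rw [h4] at h3
    exact (ENNReal.ofReal_le_ofReal_iff hba).mp h3

lemma absContOn_congr {k : ℕ} {s s' : ℝ → Vec k} {a b : ℝ}
    (h : AbsContOn s a b) (he : ∀ x ∈ Set.Icc a b, s' x = s x) : AbsContOn s' a b := by
  intro ε hε
  obtain ⟨δ, hδ, hI⟩ := h ε hε
  refine ⟨δ, hδ, fun I hab hdisj hlen => ?_⟩
  have := hI I hab hdisj hlen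
  refine le_trans (le_of_eq ?_) this
  congr 1; funext i
  have h1 := hab i
  rw [he _ ⟨by linarith [h1.1, h1.2.1], h1.2.2⟩, he _ ⟨h1.1, by linarith [h1.2.1, h1.2.2]⟩]

lemma absContOn_translate {k : ℕ} {s : ℝ → Vec k} {a b T : ℝ} (h : AbsContOn s a b) :
    AbsContOn (fun x => s (x - T)) (a + T) (b + T) := by
  intro ε hε
  obtain ⟨δ, hδ, hI⟩ := h ε hε
  refine ⟨δ, hδ, fun I hab hdisj hlen => ?_⟩
  set I' : ℕ → ℝ × ℝ := fun i => ((I i).1 - T, (I i).2 - T) with hI'd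
  have h1 : ∀ i, a ≤ (I' i).1 ∧ (I' i).1 ≤ (I' i).2 ∧ (I' i).2 ≤ b := by
    intro i
    have := hab i
    refine ⟨by simp only [I']; linarith [this.1], by simp only [I']; linarith [this.2.1],
      by simp only [I']; linarith [this.2.2]⟩
  have hIoo : ∀ i, Set.Ioo (I' i).1 (I' i).2 = (fun x => x + T) ⁻¹' Set.Ioo (I i).1 (I i).2 := by
    intro i
    ext x
    simp only [I', Set.mem_Ioo, Set.mem_preimage]
    constructor <;> intro hx <;> constructor <;> linarith [hx.1, hx.2]
  have h2 : ∀ i i', i ≠ i' → Disjoint (Set.Ioo (I' i).1 (I' i).2) (Set.Ioo (I' i').1 (I' i').2) := by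
    intro i i' hii'
    rw [hIoo i, hIoo i']
    exact Disjoint.preimage _ (hdisj i i' hii')
  have h3 : (∑' i, ((I' i).2 - (I' i).1)) ≤ δ := by
    have : (fun i => (I' i).2 - (I' i).1) = fun i => (I i).2 - (I i).1 := by
      funext i; simp only [I']; ring
    rwa [this]
  have := hI I' h1 h2 h3
  simpa only [I'] using this

/-- Finset-padding: from an `AbsContOn`-style hypothesis, nonuniform variation bounds
for a single family of intervals. -/
lemma padded_var_bound {k : ℕ} {s : ℝ → Vec k} {a' b' δ ε2 : ℝ} (haa : a' ≤ b') (hδ : 0 < δ)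
    (H : ∀ I : ℕ → ℝ × ℝ,
      (∀ i, a' ≤ (I i).1 ∧ (I i).1 ≤ (I i).2 ∧ (I i).2 ≤ b') →
      (∀ i i', i ≠ i' → Disjoint (Set.Ioo (I i).1 (I i).2) (Set.Ioo (I i').1 (I i').2)) →
      (∑' i, ((I i).2 - (I i).1)) ≤ δ →
      (∑' i, ‖s (I i).2 - s (I i).1‖) ≤ ε2)
    {I' : ℕ → ℝ × ℝ}
    (hab : ∀ i, a' ≤ (I' i).1 ∧ (I' i).1 ≤ (I' i).2 ∧ (I' i).2 ≤ b')
    (hdisj : ∀ i i', i ≠ i' → Disjoint (Set.Ioo (I' i).1 (I' i).2) (Set.Ioo (I' i').1 (I' i').2))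
    (hsummable : Summable (fun i => (I' i).2 - (I' i).1))
    (hlen : (∑' i, ((I' i).2 - (I' i).1)) ≤ δ) :
    Summable (fun i => ‖s (I' i).2 - s (I' i).1‖) ∧
      (∑' i, ‖s (I' i).2 - s (I' i).1‖) ≤ ε2 := by
  have key : ∀ u : Finset ℕ, ∑ i ∈ u, ‖s (I' i).2 - s (I' i).1‖ ≤ ε2 := by
    intro u
    set P : ℕ → ℝ × ℝ := fun i => if i ∈ u then I' i else (a', a') with hPd
    have hPab : ∀ i, a' ≤ (P i).1 ∧ (P i).1 ≤ (P i).2 ∧ (P i).2 ≤ b' := by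
      intro i
      by_cases hi : i ∈ u
      · simp only [P, hi, if_true]; exact hab i
      · simp only [P, hi, if_false]; exact ⟨le_rfl, le_rfl, haa⟩
    have hPdisj : ∀ i i', i ≠ i' →
        Disjoint (Set.Ioo (P i).1 (P i).2) (Set.Ioo (P i').1 (P i').2) := by
      intro i i' hii'
      by_cases hi : i ∈ u <;> by_cases hi' : i' ∈ u <;>
        simp only [P, hi, hi', if_true, if_false]
      · exact hdisj i i' hii'
      · simp [Set.Ioo_self]
      · simp [Set.Ioo_self]
      · simp [Set.Ioo_self]
    have hPlen : (∑' i, ((P i).2 - (P i).1)) ≤ δ := by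
      rw [tsum_eq_sum (s := u) (fun i hi => by simp [P, hi])]
      calc ∑ i ∈ u, ((P i).2 - (P i).1) = ∑ i ∈ u, ((I' i).2 - (I' i).1) :=
            Finset.sum_congr rfl (fun i hi => by simp [P, hi])
        _ ≤ ∑' i, ((I' i).2 - (I' i).1) :=
            Summable.sum_le_tsum u (fun i _ => by have := (hab i).2.1; linarith) hsummable
        _ ≤ δ := hlen
    have hH := H P hPab hPdisj hPlen
    rw [tsum_eq_sum (s := u) (fun i hi => by simp [P, hi])] at hH
    calc ∑ i ∈ u, ‖s (I' i).2 - s (I' i).1‖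
        = ∑ i ∈ u, ‖s (P i).2 - s (P i).1‖ :=
          Finset.sum_congr rfl (fun i hi => by simp [P, hi])
      _ ≤ ε2 := hH
  have hnn : (0:ℕ → ℝ) ≤ fun i => ‖s (I' i).2 - s (I' i).1‖ := fun i => norm_nonneg _
  have hs := summable_of_sum_le hnn key
  exact ⟨hs, Summable.tsum_le_of_sum_le hs key⟩

lemma absContOn_glue {k : ℕ} {s : ℝ → Vec k} {a c b : ℝ} (hac : a ≤ c) (hcb : c ≤ b)
    (h1 : AbsContOn s a c) (h2 : AbsContOn s c b) : AbsContOn s a b := by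
  intro ε hε
  obtain ⟨δ₁, hδ₁, H₁⟩ := h1 (ε/2) (by linarith)
  obtain ⟨δ₂, hδ₂, H₂⟩ := h2 (ε/2) (by linarith)
  refine ⟨min δ₁ δ₂, lt_min hδ₁ hδ₂, ?_⟩
  intro I hab hdisj hlen
  have hlensum : Summable (fun i => (I i).2 - (I i).1) := lengths_summable hab hdisj
  set I₁ : ℕ → ℝ × ℝ := fun i => (min (I i).1 c, min (I i).2 c) with hI₁d
  set I₂ : ℕ → ℝ × ℝ := fun i => (max (I i).1 c, max (I i).2 c) with hI₂d
  have hab₁ : ∀ i, a ≤ (I₁ i).1 ∧ (I₁ i).1 ≤ (I₁ i).2 ∧ (I₁ i).2 ≤ c := by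
    intro i
    have h := hab i
    exact ⟨le_min h.1 hac, min_le_min h.2.1 le_rfl, min_le_right _ _⟩
  have hab₂ : ∀ i, c ≤ (I₂ i).1 ∧ (I₂ i).1 ≤ (I₂ i).2 ∧ (I₂ i).2 ≤ b := by
    intro i
    have h := hab i
    exact ⟨le_max_right _ _, max_le_max h.2.1 le_rfl, max_le h.2.2 hcb⟩
  have hsub₁ : ∀ i, Set.Ioo (I₁ i).1 (I₁ i).2 ⊆ Set.Ioo (I i).1 (I i).2 := by
    intro i x hx
    simp only [I₁, Set.mem_Ioo] at hx ⊢
    rcases le_total (I i).1 c with h'|h'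
    · exact ⟨by rw [min_eq_left h'] at hx; exact hx.1,
        lt_of_lt_of_le hx.2 (min_le_left _ _)⟩
    · exfalso
      rw [min_eq_right h'] at hx
      have := lt_of_lt_of_le hx.2 (min_le_right _ _)
      linarith [hx.1]
  have hsub₂ : ∀ i, Set.Ioo (I₂ i).1 (I₂ i).2 ⊆ Set.Ioo (I i).1 (I i).2 := by
    intro i x hx
    simp only [I₂, Set.mem_Ioo] at hx ⊢
    rcases le_total c (I i).2 with h'|h'
    · exact ⟨lt_of_le_of_lt (le_max_left _ _) hx.1,
        by rw [max_eq_left h'] at hx; exact hx.2⟩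
    · exfalso
      rw [max_eq_right h'] at hx
      have := lt_of_le_of_lt (le_max_right _ _) hx.1
      linarith [hx.2]
  have hdisj₁ : ∀ i i', i ≠ i' →
      Disjoint (Set.Ioo (I₁ i).1 (I₁ i).2) (Set.Ioo (I₁ i').1 (I₁ i').2) :=
    fun i i' h => ((hdisj i i' h).mono (hsub₁ i) (hsub₁ i'))
  have hdisj₂ : ∀ i i', i ≠ i' →
      Disjoint (Set.Ioo (I₂ i).1 (I₂ i).2) (Set.Ioo (I₂ i').1 (I₂ i').2) :=
    fun i i' h => ((hdisj i i' h).mono (hsub₂ i) (hsub₂ i'))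
  have hlenle₁ : ∀ i, (I₁ i).2 - (I₁ i).1 ≤ (I i).2 - (I i).1 := by
    intro i
    have h := hab i
    simp only [I₁]
    rcases le_total (I i).1 c with h'|h' <;> rcases le_total (I i).2 c with h''|h'' <;>
      simp [min_eq_left, min_eq_right, h', h''] <;> linarith [h.2.1]
  have hlenle₂ : ∀ i, (I₂ i).2 - (I₂ i).1 ≤ (I i).2 - (I i).1 := by
    intro i
    have h := hab i
    simp only [I₂]
    rcases le_total (I i).1 c with h'|h' <;> rcases le_total (I i).2 c with h''|h'' <;>
      simp [max_eq_left, max_eq_right, h', h''] <;> linarith [h.2.1]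
  have hnn₁ : ∀ i, 0 ≤ (I₁ i).2 - (I₁ i).1 := fun i => by have := (hab₁ i).2.1; linarith
  have hnn₂ : ∀ i, 0 ≤ (I₂ i).2 - (I₂ i).1 := fun i => by have := (hab₂ i).2.1; linarith
  have hsum₁ : Summable (fun i => (I₁ i).2 - (I₁ i).1) :=
    Summable.of_nonneg_of_le hnn₁ hlenle₁ hlensum
  have hsum₂ : Summable (fun i => (I₂ i).2 - (I₂ i).1) :=
    Summable.of_nonneg_of_le hnn₂ hlenle₂ hlensum
  have hlen₁ : (∑' i, ((I₁ i).2 - (I₁ i).1)) ≤ δ₁ :=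
    le_trans (le_trans (Summable.tsum_le_tsum hlenle₁ hsum₁ hlensum) hlen) (min_le_left _ _)
  have hlen₂ : (∑' i, ((I₂ i).2 - (I₂ i).1)) ≤ δ₂ :=
    le_trans (le_trans (Summable.tsum_le_tsum hlenle₂ hsum₂ hlensum) hlen) (min_le_right _ _)
  obtain ⟨hvs₁, hv₁⟩ := padded_var_bound hac hδ₁ H₁ hab₁ hdisj₁ hsum₁ hlen₁
  obtain ⟨hvs₂, hv₂⟩ := padded_var_bound hcb hδ₂ H₂ hab₂ hdisj₂ hsum₂ hlen₂
  have hsplit : ∀ i, s (I i).2 - s (I i).1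
      = (s (I₁ i).2 - s (I₁ i).1) + (s (I₂ i).2 - s (I₂ i).1) := by
    intro i
    simp only [I₁, I₂]
    rcases le_total (I i).1 c with h'|h' <;> rcases le_total (I i).2 c with h''|h''
    · rw [min_eq_left h', min_eq_left h'', max_eq_right h', max_eq_right h'']; abel
    · rw [min_eq_left h', min_eq_right h'', max_eq_right h', max_eq_left h'']; abel
    · have := (hab i).2.1; have : (I i).2 = c := le_antisymm h'' (le_trans h' this)
      rw [min_eq_right h', min_eq_left h'', max_eq_left h', max_eq_right h'']; abel
    · rw [min_eq_right h', min_eq_right h'', max_eq_left h', max_eq_left h'']; abel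
  calc ∑' i, ‖s (I i).2 - s (I i).1‖
      ≤ ∑' i, (‖s (I₁ i).2 - s (I₁ i).1‖ + ‖s (I₂ i).2 - s (I₂ i).1‖) := by
        refine Summable.tsum_le_tsum (fun i => ?_) ?_ (hvs₁.add hvs₂)
        · rw [hsplit i]; exact norm_add_le _ _
        · exact Summable.of_nonneg_of_le (fun i => norm_nonneg _)
            (fun i => by rw [hsplit i]; exact norm_add_le _ _) (hvs₁.add hvs₂)
    _ = (∑' i, ‖s (I₁ i).2 - s (I₁ i).1‖) + ∑' i, ‖s (I₂ i).2 - s (I₂ i).1‖ :=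
        Summable.tsum_add hvs₁ hvs₂
    _ ≤ ε/2 + ε/2 := add_le_add hv₁ hv₂
    _ = ε := by ring

lemma measurable_subT (T : ℝ) : Measurable fun x : ℝ => x - T := by
  measurability

lemma continuous_subT (T : ℝ) : Continuous fun x : ℝ => x - T := by
  continuity

lemma ae_restrict_translate {A : Set ℝ} (hA : MeasurableSet A) {Q : ℝ → Prop} {T : ℝ}
    (h : ∀ᵐ t ∂(volume.restrict A), Q t) :
    ∀ᵐ t ∂(volume.restrict ((· - T) ⁻¹' A)), Q (t - T) := by
  rw [ae_restrict_iff' hA] at h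
  rw [ae_restrict_iff' (hA.preimage (measurable_subT T))]
  have hqmp := (measurePreserving_sub_right volume T).quasiMeasurePreserving
  have h2 := hqmp.ae h
  exact h2.mono fun t ht hmem => ht hmem

lemma ae_restrict_union {A B : Set ℝ} {P : ℝ → Prop}
    (hA : ∀ᵐ t ∂(volume.restrict A), P t) (hB : ∀ᵐ t ∂(volume.restrict B), P t) :
    ∀ᵐ t ∂(volume.restrict (A ∪ B)), P t := by
  have hle := Measure.restrict_union_le (μ := volume) A B
  have h2 : ∀ᵐ t ∂(volume.restrict A + volume.restrict B), P t :=
    ae_add_measure_iff.mpr ⟨hA, hB⟩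
  exact h2.filter_mono (ae_mono hle)

lemma ae_restrict_null {A : Set ℝ} (h : volume A = 0) (P : ℝ → Prop) :
    ∀ᵐ t ∂(volume.restrict A), P t := by
  rw [Measure.restrict_eq_zero.mpr h]
  simp

lemma ae_restrict_ne {A : Set ℝ} (T : ℝ) :
    ∀ᵐ t ∂(volume.restrict A), t ≠ T := by
  apply ae_restrict_of_ae
  rw [ae_iff]
  have : {a : ℝ | ¬ a ≠ T} = {T} := by ext y; simp
  rw [this]
  exact Real.volume_singleton

lemma nullmeas_translate {A : Set ℝ} {T : ℝ} (h : NullMeasurableSet A volume) :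
    NullMeasurableSet ((· - T) ⁻¹' A) volume :=
  h.preimage (measurePreserving_sub_right volume T).quasiMeasurePreserving

lemma mem_interior_preimage_sub {A : Set ℝ} {T x : ℝ} :
    x ∈ interior ((· - T) ⁻¹' A) ↔ x - T ∈ interior A := by
  have h := Homeomorph.preimage_interior (Homeomorph.subRight T) A
  have hc : ⇑(Homeomorph.subRight T) = (· - T) := rfl
  rw [hc] at h
  rw [← h]
  rfl

lemma hasDerivWithinAt_translate {k : ℕ} {g : ℝ → Vec k} {g' : Vec k} {S : Set ℝ} {T x : ℝ}
    (h : HasDerivWithinAt g g' S (x - T)) :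
    HasDerivWithinAt (fun s => g (s - T)) g' ((· - T) ⁻¹' S) x := by
  have hid : HasDerivWithinAt (fun s : ℝ => s - T) 1 ((· - T) ⁻¹' S) x :=
    (hasDerivWithinAt_id x _).sub_const T
  have h2 := HasDerivWithinAt.scomp x h hid (Set.mapsTo_preimage _ _)
  rw [one_smul] at h2
  exact h2

lemma eventuallyEq_sets {S S' : Set ℝ} {x : ℝ} {U : Set ℝ} (hU : U ∈ nhds x)
    (h : S ∩ U = S' ∩ U) : S =ᶠ[nhds x] S' := by
  filter_upwards [hU] with y hy
  have : y ∈ S ↔ y ∈ S' := by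
    constructor
    · intro hs
      have : y ∈ S' ∩ U := h ▸ Set.mem_inter hs hy
      exact this.1
    · intro hs
      have : y ∈ S ∩ U := h.symm ▸ Set.mem_inter hs hy
      exact this.1
  exact propext this
end ConcatAux
open ConcatAux

/-- Proposition 1 (concatenation of solution pairs): if `ψ₁ = (φ₁, υ₁)` and
`ψ₂ = (φ₂, υ₂)` are solution pairs to `H`, `ψ₁` is compact with `(T,J) = max dom ψ₁`,
`φ₁(T,J) = φ₂(0,0)`, and `(φ₂(0,0), υ₂(0,0)) ∈ C` whenever both `I^J_{ψ₁}` and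
`I^0_{ψ₂}` have nonempty interior, then the concatenation `ψ = ψ₁|ψ₂` is a solution
pair to `H`. -/
theorem concat_is_solution_pair {n m : ℕ} (H : HybridSystem n m)
    (φ₁ : ℝ → ℕ → Vec n) (υ₁ : ℝ → ℕ → Vec m) (E₁ : Set (ℝ × ℕ))
    (φ₂ : ℝ → ℕ → Vec n) (υ₂ : ℝ → ℕ → Vec m) (E₂ : Set (ℝ × ℕ))
    (φ : ℝ → ℕ → Vec n) (υ : ℝ → ℕ → Vec m) (E : Set (ℝ × ℕ))
    (T : ℝ) (J : ℕ)
    (h₁ : IsSolutionPair H φ₁ υ₁ E₁)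
    (h₂ : IsSolutionPair H φ₂ υ₂ E₂)
    (hcpt : IsCompactHTD E₁)
    (hmax : IsMaxOf E₁ T J)
    (hend : φ₁ T J = φ₂ 0 0)
    (hC : (interior (Slice E₁ J)).Nonempty → (interior (Slice E₂ 0)).Nonempty →
      (φ₂ 0 0, υ₂ 0 0) ∈ H.C)
    (hφ : IsConcat T J φ₁ E₁ φ₂ E₂ φ E)
    (hυ : IsConcat T J υ₁ E₁ υ₂ E₂ υ E) :
    IsSolutionPair H φ υ E := by
  classical
  obtain ⟨hE, hφ1, hφ2⟩ := hφ
  obtain ⟨hEυ, hυ1, hυ2⟩ := hυ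
  obtain ⟨⟨hE₁htd, hφ₁ac⟩, hυ₁inp, hinit₁, hflow₁, hjump₁⟩ := h₁
  obtain ⟨⟨hE₂htd, hφ₂ac⟩, hυ₂inp, hinit₂, hflow₂, hjump₂⟩ := h₂
  obtain ⟨t, ht0, htm, htT, hE₁⟩ := normalize_E1 hcpt hmax
  have hzero₂ : ((0:ℝ), (0:ℕ)) ∈ E₂ := HTD_zero_mem hE₂htd
  have hTJshift : ((T:ℝ), J) ∈ Shift E₂ T J := by
    rw [mem_shift_iff]
    refine ⟨le_rfl, ?_⟩
    have he : ((T - T : ℝ), J - J) = ((0:ℝ), (0:ℕ)) := by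
      rw [Prod.ext_iff]
      exact ⟨by simp, by simp⟩
    rw [he]
    exact hzero₂
  have hTJE₁ : ((T:ℝ), J) ∈ E₁ := hmax.1
  -- value lemmas
  have vφTJ : φ T J = φ₂ 0 0 := by
    have := hφ2 (T, J) hTJshift
    simpa using this
  have vυTJ : υ T J = υ₂ 0 0 := by
    have := hυ2 (T, J) hTJshift
    simpa using this
  have vφ₁ : ∀ p ∈ E₁, φ p.1 p.2 = φ₁ p.1 p.2 := by
    intro p hp
    by_cases hpTJ : p = (T, J)
    · subst hpTJ
      simp only
      rw [vφTJ, ← hend]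
    · exact hφ1 p hp hpTJ
  -- slices
  have hsliceE : ∀ j, Slice E j = Slice E₁ j ∪ Slice (Shift E₂ T J) j := by
    intro j; rw [hE]; rfl
  have hsl₁ := slice_cHTD hE₁
  have hslE_lt : ∀ j, j < J → Slice E j = Slice E₁ j := by
    intro j hj
    rw [hsliceE, slice_shift_lt hj, Set.union_empty]
  have hslE_gt : ∀ j, J < j → Slice E j = (· - T) ⁻¹' Slice E₂ (j - J) := by
    intro j hj
    rw [hsliceE, slice_shift_ge (le_of_lt hj), hsl₁ j, if_neg (by omega), Set.empty_union]
  set S₁ : Set ℝ := Set.Icc (t J) T with hS₁def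
  have hS₁ : Slice E₁ J = S₁ := by rw [hsl₁]; simp [htT, hS₁def]
  set I₀ : Set ℝ := Slice E₂ 0 with hI₀def
  set Sh : Set ℝ := (· - T) ⁻¹' I₀ with hShdef
  have hslE_J : Slice E J = S₁ ∪ Sh := by
    rw [hsliceE, hS₁, slice_shift_ge le_rfl, Nat.sub_self]
  have hI₀0 : (0:ℝ) ∈ I₀ := hzero₂
  have hI₀nonneg : ∀ x ∈ I₀, (0:ℝ) ≤ x := fun x hx => HTD_nonneg hE₂htd (x, 0) hx
  have hI₀dcl := HTD_slice0_dcl hE₂htd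
  have hI₀meas : MeasurableSet I₀ := HTD_slice_meas hE₂htd 0
  have hE₂meas : ∀ j, MeasurableSet (Slice E₂ j) := HTD_slice_meas hE₂htd
  have htJT : t J ≤ T := htT ▸ htm J le_rfl
  have hTS₁ : T ∈ S₁ := Set.right_mem_Icc.mpr htJT
  have hTSh : T ∈ Sh := by
    show T - T ∈ I₀
    simpa using hI₀0
  have hShge : ∀ x ∈ Sh, T ≤ x := by
    intro x hx
    have := hI₀nonneg (x - T) hx
    linarith
  have memS₁_of_le : ∀ x ∈ S₁ ∪ Sh, x ≤ T → x ∈ S₁ := by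
    rintro x (hx | hx) hxT
    · exact hx
    · have : x = T := le_antisymm hxT (hShge x hx)
      subst this; exact hTS₁
  have memSh_of_ge : ∀ x ∈ S₁ ∪ Sh, T ≤ x → x ∈ Sh := by
    rintro x (hx | hx) hxT
    · have : x = T := le_antisymm hx.2 hxT
      subst this; exact hTSh
    · exact hx
  have vφSJ : ∀ x ∈ S₁, φ x J = φ₁ x J := by
    intro x hx
    exact vφ₁ (x, J) (by rw [show ((x:ℝ), J) ∈ E₁ ↔ x ∈ Slice E₁ J from Iff.rfl, hS₁]; exact hx)
  have memShift_of_Sh : ∀ x ∈ Sh, ((x:ℝ), J) ∈ Shift E₂ T J := by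
    intro x hx
    rw [mem_shift_iff]
    exact ⟨le_rfl, by rw [Nat.sub_self]; exact hx⟩
  have vφSh : ∀ x ∈ Sh, φ x J = φ₂ (x - T) 0 := by
    intro x hx
    have := hφ2 (x, J) (memShift_of_Sh x hx)
    simpa using this
  have vυSh : ∀ x ∈ Sh, υ x J = υ₂ (x - T) 0 := by
    intro x hx
    have := hυ2 (x, J) (memShift_of_Sh x hx)
    simpa using this
  have vυS₁ : ∀ x ∈ S₁, x ≠ T → υ x J = υ₁ x J := by
    intro x hx hxT
    refine hυ1 (x, J) ?_ ?_
    · rw [show ((x:ℝ), J) ∈ E₁ ↔ x ∈ Slice E₁ J from Iff.rfl, hS₁]; exact hx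
    · intro h
      exact hxT (congrArg Prod.fst h)
  have vφne : ∀ j, j ≠ J → ∀ x, ((x:ℝ), j) ∈ E₁ → φ x j = φ₁ x j := by
    intro j hj x hx
    exact vφ₁ (x, j) hx
  have vυne : ∀ j, j ≠ J → ∀ x, ((x:ℝ), j) ∈ E₁ → υ x j = υ₁ x j := by
    intro j hj x hx
    refine hυ1 (x, j) hx (fun h => hj (congrArg Prod.snd h))
  have vφgt : ∀ j, J ≤ j → ∀ x, x ∈ (· - T) ⁻¹' Slice E₂ (j - J) → φ x j = φ₂ (x - T) (j - J) := by
    intro j hj x hx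
    have := hφ2 (x, j) ((mem_shift_iff _).mpr ⟨hj, hx⟩)
    simpa using this
  have vυgt : ∀ j, J ≤ j → ∀ x, x ∈ (· - T) ⁻¹' Slice E₂ (j - J) → υ x j = υ₂ (x - T) (j - J) := by
    intro j hj x hx
    have := hυ2 (x, j) ((mem_shift_iff _).mpr ⟨hj, hx⟩)
    simpa using this
  have htdE : IsHTD E := concat_IsHTD ht0 htm htT hE₁ hE₂htd hE
  have hSJmeas : MeasurableSet (S₁ ∪ Sh) :=
    measurableSet_Icc.union (hI₀meas.preimage (measurable_subT T))
  have hE₁slmeas : ∀ j, MeasurableSet (Slice E₁ j) := by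
    intro j
    rw [hsl₁]
    split
    · exact measurableSet_Icc
    · exact MeasurableSet.empty
  -- neighbourhood set equalities at T
  have hset_lt : (S₁ ∪ Sh) ∩ Set.Iio T = S₁ ∩ Set.Iio T := by
    ext x
    constructor
    · rintro ⟨hx, hxT⟩
      exact ⟨memS₁_of_le x hx (le_of_lt hxT), hxT⟩
    · rintro ⟨hx, hxT⟩
      exact ⟨Or.inl hx, hxT⟩
  have hset_gt : (S₁ ∪ Sh) ∩ Set.Ioi T = Sh ∩ Set.Ioi T := by
    ext x
    constructor
    · rintro ⟨hx, hxT⟩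
      exact ⟨memSh_of_ge x hx (le_of_lt hxT), hxT⟩
    · rintro ⟨hx, hxT⟩
      exact ⟨Or.inr hx, hxT⟩
  refine ⟨⟨htdE, ?_⟩, ⟨htdE, ?_⟩, ?_, ?_, ?_⟩
  · -- hybrid arc: local absolute continuity
    intro j a b hab hsub
    rcases Nat.lt_trichotomy j J with hj | hj | hj
    · rw [hslE_lt j hj] at hsub
      exact absContOn_congr (hφ₁ac j a b hab hsub)
        (fun x hx => vφne j (by omega) x (hsub hx))
    · replace hj := hj.symm
      subst hj
      rw [hslE_J] at hsub
      by_cases hbT : b ≤ T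
      · have hsub' : Set.Icc a b ⊆ S₁ :=
          fun x hx => memS₁_of_le x (hsub hx) (le_trans hx.2 hbT)
        exact absContOn_congr (hφ₁ac J a b hab (by rw [hS₁]; exact hsub'))
          (fun x hx => vφSJ x (hsub' hx))
      · push_neg at hbT
        by_cases haT : T ≤ a
        · have hsub' : Set.Icc a b ⊆ Sh :=
            fun x hx => memSh_of_ge x (hsub hx) (le_trans haT hx.1)
          have h2 : Set.Icc (a - T) (b - T) ⊆ I₀ := by
            intro y hy
            have h' : (y + T) - T ∈ I₀ := hsub' (⟨by linarith [hy.1], by linarith [hy.2]⟩ : y + T ∈ Set.Icc a b)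
            simpa using h' 
          have hAC := hφ₂ac 0 (a - T) (b - T) (by linarith) h2
          have h3 := absContOn_translate (T := T) hAC
          rw [sub_add_cancel, sub_add_cancel] at h3
          exact absContOn_congr h3 (fun x hx => vφSh x (hsub' hx))
        · push_neg at haT
          have ha : a ∈ S₁ := memS₁_of_le a (hsub (Set.left_mem_Icc.mpr hab)) (le_of_lt haT)
          have hb : b ∈ Sh := memSh_of_ge b (hsub (Set.right_mem_Icc.mpr hab)) (le_of_lt hbT)
          apply absContOn_glue (le_of_lt haT) (le_of_lt hbT)
          · have hsub1 : Set.Icc a T ⊆ S₁ := fun x hx => ⟨le_trans ha.1 hx.1, hx.2⟩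
            exact absContOn_congr (hφ₁ac J a T (le_of_lt haT) (by rw [hS₁]; exact hsub1))
              (fun x hx => vφSJ x (hsub1 hx))
          · have h2 : Set.Icc (0:ℝ) (b - T) ⊆ I₀ := hI₀dcl _ hb
            have hAC := hφ₂ac 0 0 (b - T) (by linarith) h2
            have h3 := absContOn_translate (T := T) hAC
            rw [zero_add, sub_add_cancel] at h3
            apply absContOn_congr h3
            intro x hx
            have hx' : x - T ∈ Set.Icc (0:ℝ) (b - T) := ⟨by linarith [hx.1], by linarith [hx.2]⟩
            exact vφSh x (h2 hx')
    · rw [hslE_gt j hj] at hsub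
      have h2 : Set.Icc (a - T) (b - T) ⊆ Slice E₂ (j - J) := by
        intro y hy
        have := hsub (⟨by linarith [hy.1], by linarith [hy.2]⟩ : y + T ∈ Set.Icc a b)
        simpa using this
      have hAC := hφ₂ac (j - J) (a - T) (b - T) (by linarith) h2
      have h3 := absContOn_translate (T := T) hAC
      rw [sub_add_cancel, sub_add_cancel] at h3
      exact absContOn_congr h3 (fun x hx => vφgt j (le_of_lt hj) x (hsub hx))
  · -- hybrid input: measurability and essential boundedness
    intro j
    rcases Nat.lt_trichotomy j J with hj | hj | hj
    · constructor
      · intro U hU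
        have heq : {x | x ∈ Slice E j ∧ υ x j ∈ U} = {x | x ∈ Slice E₁ j ∧ υ₁ x j ∈ U} := by
          ext x
          rw [hslE_lt j hj]
          simp only [Set.mem_setOf_eq]
          constructor
          · rintro ⟨h1, h2⟩
            exact ⟨h1, by rwa [vυne j (by omega) x h1] at h2⟩
          · rintro ⟨h1, h2⟩
            exact ⟨h1, by rwa [vυne j (by omega) x h1]⟩
        rw [heq]
        exact (hυ₁inp.2 j).1 U hU
      · intro r hr
        rw [hslE_lt j hj] at hr
        obtain ⟨U₁, hU₁o, hrU₁, c, hc, hae⟩ := (hυ₁inp.2 j).2 r hr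
        refine ⟨U₁, hU₁o, hrU₁, c, hc, ?_⟩
        rw [hslE_lt j hj]
        have hmem := ae_restrict_mem (μ := volume) (hU₁o.measurableSet.inter (hE₁slmeas j))
        filter_upwards [hae, hmem] with x hx hxm
        rwa [vυne j (by omega) x hxm.2]
    · replace hj := hj.symm
      subst hj
      constructor
      · intro U hU
        have heq : {x | x ∈ Slice E J ∧ υ x J ∈ U}
            = ({x | x ∈ Slice E₁ J ∧ υ₁ x J ∈ U} ∩ Set.Iio T)
              ∪ ((· - T) ⁻¹' {y | y ∈ I₀ ∧ υ₂ y 0 ∈ U}) := by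
          ext x
          rw [hslE_J]
          simp only [Set.mem_setOf_eq, Set.mem_union, Set.mem_inter_iff, Set.mem_preimage,
            Set.mem_Iio]
          constructor
          · rintro ⟨h1, h2⟩
            rcases lt_or_ge x T with hxT | hxT
            · have hx₁ : x ∈ S₁ := memS₁_of_le x h1 (le_of_lt hxT)
              exact Or.inl ⟨⟨by rw [hS₁]; exact hx₁,
                by rwa [vυS₁ x hx₁ (ne_of_lt hxT)] at h2⟩, hxT⟩
            · have hxSh : x ∈ Sh := memSh_of_ge x h1 hxT
              exact Or.inr ⟨hxSh, by rwa [vυSh x hxSh] at h2⟩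
          · rintro (⟨⟨h1, h2⟩, hxT⟩ | ⟨h1, h2⟩)
            · rw [hS₁] at h1
              exact ⟨Or.inl h1, by rwa [vυS₁ x h1 (ne_of_lt hxT)]⟩
            · exact ⟨Or.inr h1, by rwa [vυSh x h1]⟩
        rw [heq]
        refine NullMeasurableSet.union ?_ ?_
        · exact ((hυ₁inp.2 J).1 U hU).inter measurableSet_Iio.nullMeasurableSet
        · exact nullmeas_translate ((hυ₂inp.2 0).1 U hU)
      · intro r hr
        rw [hslE_J] at hr ⊢
        rcases lt_trichotomy r T with hrT | hrT | hrT
        · have hr₁ : r ∈ S₁ := memS₁_of_le r hr (le_of_lt hrT)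
          obtain ⟨U₁, hU₁o, hrU₁, c, hc, hae⟩ := (hυ₁inp.2 J).2 r (by rw [hS₁]; exact hr₁)
          refine ⟨U₁ ∩ Set.Iio T, hU₁o.inter isOpen_Iio, ⟨hrU₁, hrT⟩, c, hc, ?_⟩
          have hsub : (U₁ ∩ Set.Iio T) ∩ (S₁ ∪ Sh) ⊆ U₁ ∩ Slice E₁ J := by
            rintro x ⟨⟨hx1, hx2⟩, hx3⟩
            exact ⟨hx1, by rw [hS₁]; exact memS₁_of_le x hx3 (le_of_lt hx2)⟩
          have hae' := ae_restrict_of_ae_restrict_of_subset hsub hae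
          have hmem := ae_restrict_mem (μ := volume) (s := (U₁ ∩ Set.Iio T) ∩ (S₁ ∪ Sh))
            (((hU₁o.inter isOpen_Iio).measurableSet).inter hSJmeas)
          filter_upwards [hae', hmem] with x hx hxm
          have hx₁ : x ∈ S₁ := memS₁_of_le x hxm.2 (le_of_lt hxm.1.2)
          rwa [vυS₁ x hx₁ (ne_of_lt hxm.1.2)]
        · replace hrT := hrT.symm
          subst hrT
          obtain ⟨U₁, hU₁o, hrU₁, c₁, hc₁, hae₁⟩ := (hυ₁inp.2 J).2 T (by rw [hS₁]; exact hTS₁)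
          obtain ⟨U₂, hU₂o, hrU₂, c₂, hc₂, hae₂⟩ := (hυ₂inp.2 0).2 0 hI₀0
          refine ⟨U₁ ∩ ((· - T) ⁻¹' U₂), hU₁o.inter (hU₂o.preimage (continuous_subT T)),
            ⟨hrU₁, by simpa using hrU₂⟩, max c₁ c₂, le_trans hc₁ (le_max_left _ _), ?_⟩
          have hML : ∀ᵐ x ∂(volume.restrict (U₁ ∩ S₁)), ‖υ x J‖ ≤ max c₁ c₂ := by
            have hae₁' : ∀ᵐ x ∂(volume.restrict (U₁ ∩ S₁)), ‖υ₁ x J‖ ≤ c₁ := by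
              rw [hS₁] at hae₁; exact hae₁
            have hmem := ae_restrict_mem (μ := volume) (s := U₁ ∩ S₁)
              (hU₁o.measurableSet.inter (measurableSet_Icc : MeasurableSet S₁))
            filter_upwards [hae₁', hmem, ae_restrict_ne T] with x hx hxm hxT
            rw [vυS₁ x hxm.2 hxT]
            exact le_trans hx (le_max_left _ _)
          have hMR : ∀ᵐ x ∂(volume.restrict ((· - T) ⁻¹' (U₂ ∩ I₀))), ‖υ x J‖ ≤ max c₁ c₂ := by
            have hae₂' := ae_restrict_translate (T := T)
              (hU₂o.measurableSet.inter hI₀meas) hae₂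
            have hmem := ae_restrict_mem (μ := volume)
              ((hU₂o.measurableSet.inter hI₀meas).preimage (measurable_subT T))
            filter_upwards [hae₂', hmem] with x hx hxm
            have hxSh : x ∈ Sh := hxm.2
            rw [vυSh x hxSh]
            exact le_trans hx (le_max_right _ _)
          have hUn := ae_restrict_union hML hMR
          refine ae_restrict_of_ae_restrict_of_subset ?_ hUn
          rintro x ⟨⟨hx1, hx2⟩, hx3 | hx3⟩
          · exact Or.inl ⟨hx1, hx3⟩
          · exact Or.inr ⟨hx2, hx3⟩
        · have hrSh : r ∈ Sh := memSh_of_ge r hr (le_of_lt hrT)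
          obtain ⟨U₂, hU₂o, hrU₂, c, hc, hae⟩ := (hυ₂inp.2 0).2 (r - T) hrSh
          refine ⟨(· - T) ⁻¹' U₂ ∩ Set.Ioi T, (hU₂o.preimage (continuous_subT T)).inter isOpen_Ioi,
            ⟨hrU₂, hrT⟩, c, hc, ?_⟩
          have hae' := ae_restrict_translate (T := T) (hU₂o.measurableSet.inter hI₀meas) hae
          have hsub : ((· - T) ⁻¹' U₂ ∩ Set.Ioi T) ∩ (S₁ ∪ Sh)
              ⊆ (· - T) ⁻¹' (U₂ ∩ I₀) := by
            rintro x ⟨⟨hx1, hx2⟩, hx3⟩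
            exact ⟨hx1, memSh_of_ge x hx3 (le_of_lt hx2)⟩
          have hae'' := ae_restrict_of_ae_restrict_of_subset hsub hae'
          have hmem := ae_restrict_mem (μ := volume)
            (s := ((· - T) ⁻¹' U₂ ∩ Set.Ioi T) ∩ (S₁ ∪ Sh))
            ((((hU₂o.preimage (continuous_subT T)).inter
              isOpen_Ioi).measurableSet).inter hSJmeas)
          filter_upwards [hae'', hmem] with x hx hxm
          have hxSh : x ∈ Sh := memSh_of_ge x hxm.2 (le_of_lt hxm.1.2)
          rwa [vυSh x hxSh]
    · constructor
      · intro U hU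
        have heq : {x | x ∈ Slice E j ∧ υ x j ∈ U}
            = (· - T) ⁻¹' {y | y ∈ Slice E₂ (j - J) ∧ υ₂ y (j - J) ∈ U} := by
          ext x
          rw [hslE_gt j hj]
          simp only [Set.mem_setOf_eq, Set.mem_preimage]
          constructor
          · rintro ⟨h1, h2⟩
            exact ⟨h1, by rwa [vυgt j (le_of_lt hj) x h1] at h2⟩
          · rintro ⟨h1, h2⟩
            exact ⟨h1, by rwa [vυgt j (le_of_lt hj) x h1]⟩
        rw [heq]
        exact nullmeas_translate ((hυ₂inp.2 (j - J)).1 U hU)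
      · intro r hr
        rw [hslE_gt j hj] at hr ⊢
        obtain ⟨U₂, hU₂o, hrU₂, c, hc, hae⟩ := (hυ₂inp.2 (j - J)).2 (r - T) hr
        refine ⟨(· - T) ⁻¹' U₂, hU₂o.preimage (continuous_subT T), hrU₂, c, hc, ?_⟩
        have heq : (· - T) ⁻¹' U₂ ∩ (· - T) ⁻¹' Slice E₂ (j - J)
            = (· - T) ⁻¹' (U₂ ∩ Slice E₂ (j - J)) := rfl
        rw [heq]
        have hae' := ae_restrict_translate (T := T)
          (hU₂o.measurableSet.inter (hE₂meas (j - J))) hae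
        have hmem := ae_restrict_mem (μ := volume)
          ((hU₂o.measurableSet.inter (hE₂meas (j - J))).preimage (measurable_subT T))
        filter_upwards [hae', hmem] with x hx hxm
        rwa [vυgt j (le_of_lt hj) x hxm.2]
  · -- initial condition
    by_cases h00 : (T, J) = ((0:ℝ), (0:ℕ))
    · have hT0 : T = 0 := congrArg Prod.fst h00
      have hJ0 : J = 0 := congrArg Prod.snd h00
      rw [← hT0, ← hJ0, vφTJ, vυTJ]
      exact hinit₂
    · have h00' : ((0:ℝ), (0:ℕ)) ≠ (T, J) := fun h => h00 h.symm
      have hz₁ : ((0:ℝ), (0:ℕ)) ∈ E₁ := cHTD_zero_mem ⟨J, t, ht0, htm, hE₁⟩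
      have e1 : φ 0 0 = φ₁ 0 0 := vφ₁ _ hz₁
      have e2 : υ 0 0 = υ₁ 0 0 := hυ1 _ hz₁ h00'
      rw [e1, e2]
      exact hinit₁
  · -- flow condition
    intro j hne
    rcases Nat.lt_trichotomy j J with hj | hj | hj
    · rw [hslE_lt j hj] at hne ⊢
      obtain ⟨hCa, hCb⟩ := hflow₁ j hne
      constructor
      · intro x hx
        have hxS : x ∈ Slice E₁ j := interior_subset hx
        rw [vφne j (by omega) x hxS, vυne j (by omega) x hxS]
        exact hCa x hx
      · have hmem := ae_restrict_mem (μ := volume) (hE₁slmeas j)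
        filter_upwards [hCb, hmem] with x hx hxm
        rw [vφne j (by omega) x hxm, vυne j (by omega) x hxm]
        exact hx.congr (fun y hy => vφne j (by omega) y hy) (vφne j (by omega) x hxm)
    · replace hj := hj.symm
      subst hj
      rw [hslE_J] at hne ⊢
      have hint_lt : interior (S₁ ∪ Sh) ∩ Set.Iio T ⊆ interior S₁ := by
        apply interior_maximal ?_ (isOpen_interior.inter isOpen_Iio)
        rintro x ⟨hx1, hx2⟩
        exact memS₁_of_le x (interior_subset hx1) (le_of_lt hx2)
      have hint_gt : interior (S₁ ∪ Sh) ∩ Set.Ioi T ⊆ interior Sh := by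
        apply interior_maximal ?_ (isOpen_interior.inter isOpen_Ioi)
        rintro x ⟨hx1, hx2⟩
        exact memSh_of_ge x (interior_subset hx1) (le_of_lt hx2)
      constructor
      · intro x hx
        rcases lt_trichotomy x T with hxT | hxT | hxT
        · have hx₁ : x ∈ interior S₁ := hint_lt ⟨hx, hxT⟩
          have hx₁' : x ∈ S₁ := interior_subset hx₁
          rw [vφSJ x hx₁', vυS₁ x hx₁' (ne_of_lt hxT)]
          have := (hflow₁ J ⟨x, by rw [hS₁]; exact hx₁⟩).1 x (by rw [hS₁]; exact hx₁)
          exact this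
        · subst hxT
          obtain ⟨ε, hε, hball⟩ := Metric.mem_nhds_iff.mp (mem_interior_iff_mem_nhds.mp hx)
          rw [Real.ball_eq_Ioo] at hball
          have hlo : x - ε/2 ∈ S₁ := memS₁_of_le _
            (hball ⟨by linarith, by linarith⟩) (by linarith)
          have hhi : x + ε/2 ∈ Sh := memSh_of_ge _
            (hball ⟨by linarith, by linarith⟩) (by linarith)
          have hi₁ : (interior (Slice E₁ J)).Nonempty := by
            rw [hS₁, hS₁def, interior_Icc]
            exact ⟨x - ε/4, Set.mem_Ioo.mpr ⟨by linarith [hlo.1], by linarith⟩⟩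
          have hi₂ : (interior (Slice E₂ 0)).Nonempty := by
            have hhi' : (x + ε/2) - x ∈ I₀ := hhi
            have hIcc : Set.Icc (0:ℝ) (ε/2) ⊆ I₀ := hI₀dcl _ (by simpa using hhi')
            have hIoo : Set.Ioo (0:ℝ) (ε/2) ⊆ interior I₀ :=
              interior_maximal (fun y hy => hIcc ⟨le_of_lt hy.1, le_of_lt hy.2⟩) isOpen_Ioo
            exact ⟨ε/4, hIoo ⟨by linarith, by linarith⟩⟩
          rw [vφTJ, vυTJ]
          exact hC hi₁ hi₂
        · have hxSh : x ∈ interior Sh := hint_gt ⟨hx, hxT⟩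
          have hxSh' : x ∈ Sh := interior_subset hxSh
          rw [vφSh x hxSh', vυSh x hxSh']
          have hxint : x - T ∈ interior I₀ := mem_interior_preimage_sub.mp hxSh
          exact (hflow₂ 0 ⟨x - T, hxint⟩).1 (x - T) hxint
      · apply ae_restrict_union
        · -- S₁ part
          rcases eq_or_lt_of_le htJT with heq | hlt
          · apply ae_restrict_null
            rw [hS₁def, ← heq, Real.volume_Icc, sub_self, ENNReal.ofReal_zero]
          · have hi₁ : (interior (Slice E₁ J)).Nonempty := by
              rw [hS₁, hS₁def, interior_Icc]
              exact Set.nonempty_Ioo.mpr hlt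
            have hb := (hflow₁ J hi₁).2
            rw [hS₁] at hb
            have hmem := ae_restrict_mem (μ := volume) (measurableSet_Icc : MeasurableSet S₁)
            filter_upwards [hb, hmem, ae_restrict_ne T] with x hx hxm hxT
            have hxlt : x < T := lt_of_le_of_ne hxm.2 hxT
            rw [vφSJ x hxm, vυS₁ x hxm hxT]
            have hd : HasDerivWithinAt (fun s => φ s J) (H.f (φ₁ x J, υ₁ x J)) S₁ x :=
              hx.congr (fun y hy => vφSJ y hy) (vφSJ x hxm)
            exact (hasDerivWithinAt_congr_set
              (eventuallyEq_sets (Iio_mem_nhds hxlt) hset_lt)).mpr hd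
        · -- Sh part
          by_cases hi₂ : (interior I₀).Nonempty
          · have hb := (hflow₂ 0 hi₂).2
            have hb' := ae_restrict_translate (T := T) hI₀meas hb
            have hmem := ae_restrict_mem (μ := volume)
              (hI₀meas.preimage (measurable_subT T))
            filter_upwards [hb', hmem, ae_restrict_ne T] with x hx hxm hxT
            have hxSh : x ∈ Sh := hxm
            have hxgt : T < x := lt_of_le_of_ne (hShge x hxSh) (Ne.symm hxT)
            rw [vφSh x hxSh, vυSh x hxSh]
            have hd1 := hasDerivWithinAt_translate (T := T) hx
            have hd : HasDerivWithinAt (fun s => φ s J)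
                (H.f (φ₂ (x - T) 0, υ₂ (x - T) 0)) Sh x :=
              hd1.congr (fun y hy => vφSh y hy) (vφSh x hxSh)
            exact (hasDerivWithinAt_congr_set
              (eventuallyEq_sets (Ioi_mem_nhds hxgt) hset_gt)).mpr hd
          · apply ae_restrict_null
            have hsub : Sh ⊆ {T} := by
              intro x hx
              by_contra hxT
              have hge := hShge x hx
              have hgt : T < x := lt_of_le_of_ne hge (fun h => hxT (by simp [← h]))
              have hIcc : Set.Icc (0:ℝ) (x - T) ⊆ I₀ := hI₀dcl _ hx
              have : Set.Ioo (0:ℝ) (x - T) ⊆ interior I₀ :=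
                interior_maximal (fun y hy => hIcc ⟨le_of_lt hy.1, le_of_lt hy.2⟩) isOpen_Ioo
              exact hi₂ ⟨(x - T)/2, this ⟨by linarith, by linarith⟩⟩
            exact measure_mono_null hsub Real.volume_singleton
    · rw [hslE_gt j hj] at hne ⊢
      have hne' : (interior (Slice E₂ (j - J))).Nonempty := by
        obtain ⟨x, hx⟩ := hne
        exact ⟨x - T, mem_interior_preimage_sub.mp hx⟩
      obtain ⟨hCa, hCb⟩ := hflow₂ (j - J) hne'
      constructor
      · intro x hx
        have hxS : x ∈ (· - T) ⁻¹' Slice E₂ (j - J) := interior_subset hx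
        rw [vφgt j (le_of_lt hj) x hxS, vυgt j (le_of_lt hj) x hxS]
        exact hCa (x - T) (mem_interior_preimage_sub.mp hx)
      · have hb' := ae_restrict_translate (T := T) (hE₂meas (j - J)) hCb
        have hmem := ae_restrict_mem (μ := volume)
          ((hE₂meas (j - J)).preimage (measurable_subT T))
        filter_upwards [hb', hmem] with x hx hxm
        rw [vφgt j (le_of_lt hj) x hxm, vυgt j (le_of_lt hj) x hxm]
        have hd1 := hasDerivWithinAt_translate (T := T) hx
        exact hd1.congr (fun y hy => vφgt j (le_of_lt hj) y hy) (vφgt j (le_of_lt hj) x hxm)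
  · -- jump condition
    intro p hp hp1
    rw [hE] at hp hp1
    by_cases hcase : (p.1, p.2 + 1) ∈ E₁
    · have hp2lt : p.2 + 1 ≤ J := ((mem_cHTD_iff hE₁ _).mp hcase).1
      have hpE₁ : p ∈ E₁ := by
        rcases hp with h | h
        · exact h
        · have := ((mem_shift_iff p).mp h).1
          omega
      have hpne : p ≠ (T, J) := by
        intro h
        have : p.2 = J := congrArg Prod.snd h
        omega
      have e1 : φ p.1 p.2 = φ₁ p.1 p.2 := vφ₁ p hpE₁
      have e2 : υ p.1 p.2 = υ₁ p.1 p.2 := hυ1 p hpE₁ hpne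
      have e3 : φ p.1 (p.2 + 1) = φ₁ p.1 (p.2 + 1) := vφ₁ (p.1, p.2 + 1) hcase
      rw [e1, e2, e3]
      exact hjump₁ p hpE₁ hcase
    · have hpsh1 : (p.1, p.2 + 1) ∈ Shift E₂ T J := by
        rcases hp1 with h | h
        · exact absurd h hcase
        · exact h
      obtain ⟨hJle, hq1⟩ := (mem_shift_iff _).mp hpsh1
      simp only at hJle hq1
      have hpShift : p ∈ Shift E₂ T J := by
        rcases hp with h | h
        · -- p ∈ E₁; show p = (T, J)
          have hp2J : p.2 ≤ J := ((mem_cHTD_iff hE₁ _).mp h).1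
          have hp1T : p.1 ≤ T := (hmax.2 p h).1
          rcases Nat.lt_or_ge p.2 J with hlt | hge
          · -- p.2 + 1 = J
            have hJeq : p.2 + 1 = J := by omega
            have : p.2 + 1 - J = 0 := by omega
            rw [this] at hq1
            have : (0:ℝ) ≤ p.1 - T := hI₀nonneg _ hq1
            have hpT : p.1 = T := by linarith
            exfalso
            apply hcase
            have : (p.1, p.2 + 1) = ((T:ℝ), J) := by
              rw [Prod.ext_iff]
              exact ⟨hpT, hJeq⟩
            rw [this]
            exact hTJE₁
          · have hp2eq : p.2 = J := by omega
            have : (0:ℝ) ≤ p.1 - T := HTD_nonneg hE₂htd _ hq1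
            have hpT : p.1 = T := by linarith
            have : p = ((T:ℝ), J) := by
              rw [Prod.ext_iff]
              exact ⟨hpT, hp2eq⟩
            rw [this]
            exact hTJshift
        · exact h
      obtain ⟨hJle', hq⟩ := (mem_shift_iff _).mp hpShift
      have hsucc : p.2 + 1 - J = (p.2 - J) + 1 := by omega
      rw [hsucc] at hq1
      have hj2 := hjump₂ (p.1 - T, p.2 - J) hq hq1
      have e1 : φ p.1 p.2 = φ₂ (p.1 - T) (p.2 - J) := hφ2 p hpShift
      have e2 : υ p.1 p.2 = υ₂ (p.1 - T) (p.2 - J) := hυ2 p hpShift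
      have e3 : φ p.1 (p.2 + 1) = φ₂ (p.1 - T) ((p.2 - J) + 1) := by
        have := hφ2 (p.1, p.2 + 1) hpsh1
        simpa [hsucc] using this
      rw [e1, e2, e3]
      exact hj2
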